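/- (Key step of the linear-independence lemma: a collinear direction gives no progress.) Fix a nonzero vector a₁ ∈ ℝ^d and let g^{(1)}(x) = g(x)·f_{a₁}(⟨a₁,x⟩)/g_{a₁}(⟨a₁,x⟩). Let a₂ = α·a₁ with α ≠ 0. Then the a₂-marginal density of g^{(1)} equals f_{a₂} almost everywhere, and therefore the next update g^{(2)}(x) := g^{(1)}(x)·f_{a₂}(⟨a₂,x⟩)/[g^{(1)}]_{a₂}(⟨a₂,x⟩) equals g^{(1)}(x) for almost every x. In particular, if K(g^{(2)}, f) = 0 then already K(g^{(1)}, f) = 0. -/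

import Mathlib

open MeasureTheory Real Filter
open scoped ENNReal Topology RealInnerProductSpace

noncomputable section

/-- Euclidean space `ℝ^d`. -/
abbrev Euc (d : ℕ) := EuclideanSpace ℝ (Fin d)

/-- The measure on `α` with Lebesgue density `p`. -/
def densMeasure {α : Type*} [MeasureSpace α] (p : α → ℝ) : Measure α :=
  MeasureTheory.volume.withDensity (fun x => ENNReal.ofReal (p x))

/-- `pa` is the Lebesgue density of the pushforward of the measure `p ⬝ Leb`
under the projection `x ↦ ⟪a, x⟫`. -/
def IsMarg {d : ℕ} (p : Euc d → ℝ) (a : Euc d) (pa : ℝ → ℝ) : Prop :=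
  Measure.map (fun x => (⟪a, x⟫ : ℝ)) (densMeasure p) = densMeasure pa

/- Kullback–Leibler divergence between densities: `∫ p log (p/q)` if
`p ⬝ Leb ≪ q ⬝ Leb`, and `+∞` otherwise. -/
open Classical in
def KLD {α : Type*} [MeasureSpace α] (p q : α → ℝ) : EReal :=
  if densMeasure p ≪ densMeasure q
  then ((∫ x, p x * Real.log (p x / q x) : ℝ) : EReal)
  else ⊤

theorem map_withDensity_comp {X Y : Type*} [MeasurableSpace X] [MeasurableSpace Y]
    (μ : Measure X) {T : X → Y} (hT : Measurable T) {h : Y → ℝ≥0∞} (hh : Measurable h)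
    {H : X → ℝ≥0∞} (hH : ∀ x, H x = h (T x)) :
    Measure.map T (μ.withDensity H) = (Measure.map T μ).withDensity h := by
  have : H = fun x => h (T x) := funext hH
  subst this
  ext s hs
  rw [Measure.map_apply hT hs, withDensity_apply _ (hT hs), withDensity_apply _ hs,
    ← setLIntegral_map hs hh hT]

theorem volume_absCont {α : Type*} [MeasureSpace α] {g : α → ℝ}
    (hgm : Measurable g) (hgpos : ∀ x, 0 < g x) :
    (MeasureTheory.volume : Measure α) ≪ densMeasure g := by
  refine Measure.AbsolutelyContinuous.mk fun s hs h0 => ?_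
  rw [densMeasure, withDensity_apply _ hs] at h0
  rw [lintegral_eq_zero_iff hgm.ennreal_ofReal] at h0
  have huniv : {x | ¬ ENNReal.ofReal (g x) = 0} = Set.univ := by
    ext x; simp [ENNReal.ofReal_eq_zero, not_le, hgpos x]
  have h2 := ae_iff.mp h0
  simp only [Pi.zero_apply] at h2
  rw [huniv, Measure.restrict_apply_univ] at h2
  exact h2

set_option maxHeartbeats 1000000 in
/-- key step of the linear-independence lemma: if `a₂ = α·a₁` with
`α ≠ 0`, then the `a₂`-marginal of `g⁽¹⁾ = g·(f_{a₁}/g_{a₁})(⟪a₁,·⟫)` equals `f_{a₂}`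
a.e., the next update `g⁽²⁾ = g⁽¹⁾·(f_{a₂}/[g⁽¹⁾]_{a₂})(⟪a₂,·⟫)` equals `g⁽¹⁾` a.e.,
and `K(g⁽²⁾, f) = 0 → K(g⁽¹⁾, f) = 0`. -/
theorem statement10 (d : ℕ) (hd : 1 ≤ d) (f g : Euc d → ℝ)
    (hfm : Measurable f) (hgm : Measurable g)
    (hfpos : ∀ x, 0 < f x) (hgpos : ∀ x, 0 < g x)
    (hfint : ∫ x, f x = 1) (hgint : ∫ x, g x = 1)
    (a₁ : Euc d) (ha₁ : a₁ ≠ 0) (α : ℝ) (hα : α ≠ 0)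
    (a₂ : Euc d) (ha₂ : a₂ = α • a₁)
    (fa1 ga1 fa2 : ℝ → ℝ)
    (hfa1m : Measurable fa1) (hga1m : Measurable ga1) (hfa2m : Measurable fa2)
    (hfa1nn : ∀ t, 0 ≤ fa1 t) (hga1nn : ∀ t, 0 ≤ ga1 t) (hfa2nn : ∀ t, 0 ≤ fa2 t)
    (hfa1 : IsMarg f a₁ fa1) (hga1 : IsMarg g a₁ ga1) (hfa2 : IsMarg f a₂ fa2)
    (g1 : Euc d → ℝ) (hg1 : g1 = fun x => g x * fa1 ⟪a₁, x⟫ / ga1 ⟪a₁, x⟫)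
    (g1a2 : ℝ → ℝ) (hg1a2m : Measurable g1a2) (hg1a2nn : ∀ t, 0 ≤ g1a2 t)
    (hg1a2 : IsMarg g1 a₂ g1a2)
    (g2 : Euc d → ℝ) (hg2 : g2 = fun x => g1 x * fa2 ⟪a₂, x⟫ / g1a2 ⟪a₂, x⟫) :
    (∀ᵐ s ∂(MeasureTheory.volume : Measure ℝ), g1a2 s = fa2 s) ∧
    (∀ᵐ x ∂(MeasureTheory.volume : Measure (Euc d)), g2 x = g1 x) ∧
    (KLD g2 f = 0 → KLD g1 f = 0) := by
  -- projections
  set T₁ : Euc d → ℝ := fun x => ⟪a₁, x⟫ with hT₁def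
  set T₂ : Euc d → ℝ := fun x => ⟪a₂, x⟫ with hT₂def
  have hT₁m : Measurable T₁ := (continuous_const.inner continuous_id).measurable
  have hT₂m : Measurable T₂ := (continuous_const.inner continuous_id).measurable
  have hT₂eq : T₂ = (fun t : ℝ => α * t) ∘ T₁ := by
    funext x
    show (⟪a₂, x⟫ : ℝ) = α * ⟪a₁, x⟫
    rw [ha₂, real_inner_smul_left]
  have hαm : Measurable (fun t : ℝ => α * t) := measurable_const_mul α
  have hg1m : Measurable g1 := by
    rw [hg1]; exact (hgm.mul (hfa1m.comp hT₁m)).div (hga1m.comp hT₁m)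
  have hg1nn : ∀ x, 0 ≤ g1 x := by
    intro x; rw [hg1]
    exact div_nonneg (mul_nonneg (hgpos x).le (hfa1nn _)) (hga1nn _)
  -- fa1 vanishes a.e. on {ga1 = 0}
  have hac : densMeasure fa1 ≪ densMeasure ga1 := by
    rw [← hfa1, ← hga1]
    exact ((withDensity_absolutelyContinuous _ _).trans
      (volume_absCont hgm hgpos)).map hT₁m
  have hZ1m : MeasurableSet {t : ℝ | ga1 t = 0} := hga1m (measurableSet_singleton 0)
  have hga1Z : densMeasure ga1 {t : ℝ | ga1 t = 0} = 0 := by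
    rw [densMeasure, withDensity_apply _ hZ1m]
    refine le_antisymm ?_ (zero_le)
    calc ∫⁻ t in {t : ℝ | ga1 t = 0}, ENNReal.ofReal (ga1 t)
        ≤ ∫⁻ t in {t : ℝ | ga1 t = 0}, 0 := by
          refine setLIntegral_mono' hZ1m fun t ht => ?_
          simp [Set.mem_setOf_eq.mp ht]
      _ = 0 := by simp
  have hfa1Z : ∀ᵐ t ∂(volume : Measure ℝ), ga1 t = 0 → fa1 t = 0 := by
    have h0 : densMeasure fa1 {t : ℝ | ga1 t = 0} = 0 := hac hga1Z
    rw [densMeasure, withDensity_apply _ hZ1m,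
      lintegral_eq_zero_iff hfa1m.ennreal_ofReal] at h0
    have := (ae_restrict_iff' hZ1m).mp h0
    filter_upwards [this] with t ht hzt
    have := ht hzt
    simp only [Pi.zero_apply, ENNReal.ofReal_eq_zero] at this
    exact le_antisymm this (hfa1nn t)
  -- Step A: marginal of g1 along a₁ is fa1
  have hHm : Measurable (fun t : ℝ => ENNReal.ofReal (fa1 t / ga1 t)) :=
    (hfa1m.div hga1m).ennreal_ofReal
  have hHm' : Measurable (fun x : Euc d => ENNReal.ofReal (fa1 (T₁ x) / ga1 (T₁ x))) :=
    ((hfa1m.comp hT₁m).div (hga1m.comp hT₁m)).ennreal_ofReal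
  have hdens_g1 : densMeasure g1
      = (densMeasure g).withDensity
        (fun x => ENNReal.ofReal (fa1 (T₁ x) / ga1 (T₁ x))) := by
    rw [densMeasure, densMeasure, ← withDensity_mul _ hgm.ennreal_ofReal hHm']
    congr 1
    funext x
    simp only [Pi.mul_apply, hg1, mul_div_assoc]
    rw [ENNReal.ofReal_mul (hgpos x).le]
  have hstepA : Measure.map T₁ (densMeasure g1) = densMeasure fa1 := by
    have h1 : Measure.map T₁ (densMeasure g1)
        = (Measure.map T₁ (densMeasure g)).withDensity
          (fun t => ENNReal.ofReal (fa1 t / ga1 t)) := by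
      rw [hdens_g1]; exact map_withDensity_comp _ hT₁m hHm (fun x => rfl)
    rw [h1, hga1, densMeasure, ← withDensity_mul _ hga1m.ennreal_ofReal hHm, densMeasure]
    refine withDensity_congr_ae ?_
    filter_upwards [hfa1Z] with t ht
    simp only [Pi.mul_apply]
    rcases eq_or_ne (ga1 t) 0 with h0 | h0
    · simp [h0, ht h0]
    · rw [← ENNReal.ofReal_mul (hga1nn t)]
      congr 1
      field_simp
  -- Step B/C: marginal measures along a₂
  have hmapT₂ : ∀ p : Euc d → ℝ, Measure.map T₂ (densMeasure p)
      = Measure.map (fun t : ℝ => α * t) (Measure.map T₁ (densMeasure p)) := by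
    intro p
    rw [Measure.map_map hαm hT₁m, ← hT₂eq]
  have hkey : densMeasure g1a2 = densMeasure fa2 := by
    rw [← hg1a2, ← hfa2]
    show Measure.map T₂ (densMeasure g1) = Measure.map T₂ (densMeasure f)
    rw [hmapT₂ g1, hmapT₂ f, hstepA, hfa1]
  -- Part 1
  have part1 : ∀ᵐ s ∂(volume : Measure ℝ), g1a2 s = fa2 s := by
    have := (withDensity_eq_iff_of_sigmaFinite
      hg1a2m.ennreal_ofReal.aemeasurable hfa2m.ennreal_ofReal.aemeasurable).mp hkey
    filter_upwards [this] with t ht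
    exact (ENNReal.ofReal_eq_ofReal_iff (hg1a2nn t) (hfa2nn t)).mp ht
  -- Part 2
  have hBm : MeasurableSet {t : ℝ | g1a2 t ≠ fa2 t ∨ g1a2 t = 0} := by
    refine MeasurableSet.union ?_ (hg1a2m (measurableSet_singleton 0))
    exact (measurableSet_eq_fun hg1a2m hfa2m).compl
  have hB0 : densMeasure g1a2 {t : ℝ | g1a2 t ≠ fa2 t ∨ g1a2 t = 0} = 0 := by
    have hsub : densMeasure g1a2 {t : ℝ | g1a2 t ≠ fa2 t} = 0 := by
      refine withDensity_absolutelyContinuous volume _ ?_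
      rw [← compl_mem_ae_iff]
      exact part1.mono fun t ht => by simpa using ht
    have hZm : MeasurableSet {t : ℝ | g1a2 t = 0} := hg1a2m (measurableSet_singleton 0)
    have hz : densMeasure g1a2 {t : ℝ | g1a2 t = 0} = 0 := by
      rw [densMeasure, withDensity_apply _ hZm]
      refine le_antisymm ?_ (zero_le)
      calc ∫⁻ t in {t : ℝ | g1a2 t = 0}, ENNReal.ofReal (g1a2 t)
          ≤ ∫⁻ t in {t : ℝ | g1a2 t = 0}, 0 :=
            setLIntegral_mono' hZm fun t ht => by simp [Set.mem_setOf_eq.mp ht]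
        _ = 0 := by simp
    have hun : {t : ℝ | g1a2 t ≠ fa2 t ∨ g1a2 t = 0}
        = {t : ℝ | g1a2 t ≠ fa2 t} ∪ {t : ℝ | g1a2 t = 0} := Set.setOf_or
    rw [hun]
    refine le_antisymm ((measure_union_le _ _).trans_eq ?_) (zero_le)
    rw [hsub, hz, add_zero]
  have hpre0 : densMeasure g1 (T₂ ⁻¹' {t : ℝ | g1a2 t ≠ fa2 t ∨ g1a2 t = 0}) = 0 := by
    rw [← Measure.map_apply hT₂m hBm, hg1a2]; exact hB0
  have hg1zero : ∀ᵐ x ∂(volume : Measure (Euc d)),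
      (g1a2 (T₂ x) ≠ fa2 (T₂ x) ∨ g1a2 (T₂ x) = 0) → g1 x = 0 := by
    rw [densMeasure, withDensity_apply _ (hT₂m hBm),
      lintegral_eq_zero_iff hg1m.ennreal_ofReal] at hpre0
    have := (ae_restrict_iff' (hT₂m hBm)).mp hpre0
    filter_upwards [this] with x hx hmem
    have := hx hmem
    simp only [Pi.zero_apply, ENNReal.ofReal_eq_zero] at this
    exact le_antisymm this (hg1nn x)
  have part2 : ∀ᵐ x ∂(volume : Measure (Euc d)), g2 x = g1 x := by
    filter_upwards [hg1zero] with x hx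
    rw [hg2]
    by_cases hcase : g1a2 (T₂ x) ≠ fa2 (T₂ x) ∨ g1a2 (T₂ x) = 0
    · simp [hx hcase]
    · push_neg at hcase
      obtain ⟨heq, hne⟩ := hcase
      show g1 x * fa2 (T₂ x) / g1a2 (T₂ x) = g1 x
      rw [← heq, mul_div_assoc, div_self hne, mul_one]
  refine ⟨part1, part2, fun hK => ?_⟩
  -- Part 3
  have hdens : densMeasure g2 = densMeasure g1 :=
    withDensity_congr_ae (part2.mono fun x hx => by simp only [hx])
  have hint : (∫ x, g2 x * Real.log (g2 x / f x)) = ∫ x, g1 x * Real.log (g1 x / f x) :=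
    integral_congr_ae (part2.mono fun x hx => by simp only [hx])
  unfold KLD at hK ⊢
  rwa [hdens, hint] at hK
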